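/- Let f be a probability density on ℝ^d with probability measure F, let R ≥ 1, and set α = ∫_{‖x‖>R} f dλ, β = ∫_{‖x‖>R} f log_+ f dλ, μ₂ = ∫_{‖x‖>R} ‖x‖² f dλ. Assume 0 < α < 1/4. Let φ_R(x) = (2πR²)^{-d/2} exp(−‖x‖²/(2R²)) be the Gaussian density with mean 0 and covariance R² I_d, and let g be any probability density on ℝ^d satisfying g(x) ≥ α φ_R(x) for all x. Then ∫_{‖x‖>R} log_+(f(x)/g(x)) dF(x) ≤ β + α log(1/α) + α (d/2) log(2πR²) + μ₂/(2R²). -/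
import Mathlib


open MeasureTheory Matrix
open scoped ENNReal NNReal BigOperators

/-- The Gaussian density on `ℝ^d` with mean `μ` and covariance matrix `S`. -/
noncomputable def gaussDensity {d : ℕ} (μ : EuclideanSpace ℝ (Fin d))
    (S : Matrix (Fin d) (Fin d) ℝ) (x : EuclideanSpace ℝ (Fin d)) : ℝ :=
  (Real.sqrt ((2 * Real.pi) ^ d * S.det))⁻¹ *
    Real.exp (-(1 / 2) * ((fun i => x i - μ i) ⬝ᵥ S⁻¹.mulVec (fun i => x i - μ i)))

/-- `g` is a finite Gaussian mixture density on `ℝ^d`. -/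
def IsGaussianMixture {d : ℕ} (g : EuclideanSpace ℝ (Fin d) → ℝ) : Prop :=
  ∃ (m : ℕ) (w : Fin m → ℝ) (μ : Fin m → EuclideanSpace ℝ (Fin d))
    (S : Fin m → Matrix (Fin d) (Fin d) ℝ),
    (∀ j, 0 ≤ w j) ∧ (∑ j, w j = 1) ∧ (∀ j, (S j).PosDef) ∧
    ∀ x, g x = ∑ j, w j * gaussDensity (μ j) (S j) x

/-- `f` is a probability density with respect to the measure `μ`. -/
def IsProbDensity {α : Type*} [MeasurableSpace α] (μ : Measure α) (f : α → ℝ) : Prop :=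
  Measurable f ∧ (∀ x, 0 ≤ f x) ∧ ∫⁻ x, ENNReal.ofReal (f x) ∂μ = 1

/-- Kullback–Leibler divergence `∫ f log (f/g)` as an extended real number:
it equals `+∞` exactly when the positive part of the integrand has infinite integral
(the negative part being automatically integrable for probability densities). -/
noncomputable def KL {α : Type*} [MeasurableSpace α] (μ : Measure α) (f g : α → ℝ) : EReal :=
  ((∫⁻ x, ENNReal.ofReal (f x * Real.log (f x / g x)) ∂μ : ℝ≥0∞) : EReal)
  - ((∫⁻ x, ENNReal.ofReal (-(f x * Real.log (f x / g x))) ∂μ : ℝ≥0∞) : EReal)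

/-- `log_+ t = max (log t) 0`; note `Real.log 0 = 0` so `logPlus 0 = 0`. -/
noncomputable def logPlus (t : ℝ) : ℝ := max (Real.log t) 0

/-- Uniform integrability of a family of nonnegative functions under `F`:
`lim_{M→∞} sup_m ∫_{X_m > M} X_m dF = 0`. -/
def UIFamily {α : Type*} [MeasurableSpace α] (F : Measure α) (X : ℕ → α → ℝ) : Prop :=
  Filter.Tendsto (fun M : ℝ => ⨆ m, ∫⁻ x in {x | M < X m x}, ENNReal.ofReal (X m x) ∂F)
    Filter.atTop (nhds 0)

/-- tail bound for the positive log-ratio.  If `g ≥ α φ_R` pointwise,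
where `φ_R` is the centered Gaussian density with covariance `R² I_d`, `R ≥ 1`, and
`α = ∫_{‖x‖>R} f dλ ∈ (0, 1/4)`, then
`∫_{‖x‖>R} log_+(f/g) dF ≤ β + α log(1/α) + α (d/2) log(2πR²) + μ₂/(2R²)`. -/
theorem tail_log_ratio_bound {d : ℕ}
    (f : EuclideanSpace ℝ (Fin d) → ℝ) (hf : IsProbDensity volume f)
    (F : Measure (EuclideanSpace ℝ (Fin d)))
    (hF : F = volume.withDensity fun x => ENNReal.ofReal (f x))
    (R : ℝ) (hR : 1 ≤ R)
    (α : ℝ)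
    (hα : ENNReal.ofReal α = ∫⁻ x in {x : EuclideanSpace ℝ (Fin d) | R < ‖x‖},
      ENNReal.ofReal (f x))
    (hα0 : 0 < α) (hα14 : α < 1 / 4)
    (φR : EuclideanSpace ℝ (Fin d) → ℝ)
    (hφR : ∀ x, φR x =
      ((2 * Real.pi * R ^ 2) ^ ((d : ℝ) / 2))⁻¹ * Real.exp (-‖x‖ ^ 2 / (2 * R ^ 2)))
    (g : EuclideanSpace ℝ (Fin d) → ℝ) (hg : IsProbDensity volume g)
    (hlb : ∀ x, α * φR x ≤ g x) :
    ∫⁻ x in {x : EuclideanSpace ℝ (Fin d) | R < ‖x‖},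
        ENNReal.ofReal (logPlus (f x / g x)) ∂F ≤
      (∫⁻ x in {x : EuclideanSpace ℝ (Fin d) | R < ‖x‖},
        ENNReal.ofReal (f x * logPlus (f x))) +
      ENNReal.ofReal (α * Real.log (1 / α)) +
      ENNReal.ofReal (α * ((d : ℝ) / 2) * Real.log (2 * Real.pi * R ^ 2)) +
      (∫⁻ x in {x : EuclideanSpace ℝ (Fin d) | R < ‖x‖},
        ENNReal.ofReal (‖x‖ ^ 2 * f x)) / ENNReal.ofReal (2 * R ^ 2) := by
  obtain ⟨hfm, hf0, -⟩ := hf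
  obtain ⟨hgm, hg0, -⟩ := hg
  have hS : MeasurableSet {x : EuclideanSpace ℝ (Fin d) | R < ‖x‖} :=
    measurableSet_lt measurable_const measurable_norm
  have hπ : (0:ℝ) < 2 * Real.pi * R ^ 2 := by positivity
  have hπ1 : (1:ℝ) ≤ 2 * Real.pi * R ^ 2 := by
    nlinarith [Real.pi_gt_three, sq_nonneg (R - 1)]
  have hRsq : (0:ℝ) < 2 * R ^ 2 := by positivity
  have hcα : 0 ≤ Real.log (1 / α) :=
    (Real.log_pos (by rw [lt_div_iff₀ hα0]; linarith)).le
  have hlog2π : 0 ≤ Real.log (2 * Real.pi * R ^ 2) := Real.log_nonneg hπ1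
  have hlp : ∀ t : ℝ, 0 ≤ logPlus t := fun t => le_max_right _ _
  -- pointwise real inequality
  have key : ∀ x : EuclideanSpace ℝ (Fin d),
      f x * logPlus (f x / g x) ≤
        f x * logPlus (f x) + f x * Real.log (1 / α)
          + f x * (((d : ℝ) / 2) * Real.log (2 * Real.pi * R ^ 2))
          + ‖x‖ ^ 2 * f x / (2 * R ^ 2) := by
    intro x
    set c : ℝ := Real.log (1 / α) + ((d : ℝ) / 2) * Real.log (2 * Real.pi * R ^ 2)
        + ‖x‖ ^ 2 / (2 * R ^ 2) with hc
    have hc0 : 0 ≤ c := by positivity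
    have hφpos : 0 < φR x := by
      rw [hφR x]
      positivity
    have hgpos : 0 < g x := lt_of_lt_of_le (mul_pos hα0 hφpos) (hlb x)
    have hlogφ : Real.log (φR x) =
        -(((d : ℝ) / 2) * Real.log (2 * Real.pi * R ^ 2)) + -‖x‖ ^ 2 / (2 * R ^ 2) := by
      rw [hφR x, Real.log_mul (by positivity) (Real.exp_pos _).ne',
        Real.log_inv, Real.log_exp, Real.log_rpow hπ]
    have hlg : -Real.log (g x) ≤ c := by
      have h1 : Real.log (α * φR x) ≤ Real.log (g x) :=
        Real.log_le_log (mul_pos hα0 hφpos) (hlb x)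
      have h2 : Real.log (α * φR x) = Real.log α + Real.log (φR x) :=
        Real.log_mul hα0.ne' hφpos.ne'
      have h3 : Real.log (1 / α) = -Real.log α := by
        rw [one_div, Real.log_inv]
      rw [hc, h3]
      have := h1
      rw [h2, hlogφ] at this
      have hdiv : -‖x‖ ^ 2 / (2 * R ^ 2) = -(‖x‖ ^ 2 / (2 * R ^ 2)) := by ring
      rw [hdiv] at this
      linarith
    have hmax : logPlus (f x / g x) ≤ logPlus (f x) + c := by
      unfold logPlus
      rcases eq_or_lt_of_le (hf0 x) with h0 | hfpos
      · rw [← h0]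
        simp only [zero_div, Real.log_zero, max_self]
        have := hlp (f x)
        unfold logPlus at this
        positivity
      · apply max_le
        · rw [Real.log_div hfpos.ne' hgpos.ne']
          have := le_max_left (Real.log (f x)) 0
          linarith
        · positivity
    have h1 : f x * logPlus (f x / g x) ≤ f x * (logPlus (f x) + c) :=
      mul_le_mul_of_nonneg_left hmax (hf0 x)
    calc f x * logPlus (f x / g x) ≤ f x * (logPlus (f x) + c) := h1
      _ = f x * logPlus (f x) + f x * Real.log (1 / α)
          + f x * (((d : ℝ) / 2) * Real.log (2 * Real.pi * R ^ 2))
          + ‖x‖ ^ 2 * f x / (2 * R ^ 2) := by rw [hc]; ring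
  -- pointwise ENNReal inequality
  have keyE : ∀ x : EuclideanSpace ℝ (Fin d),
      ENNReal.ofReal (f x) * ENNReal.ofReal (logPlus (f x / g x)) ≤
        ENNReal.ofReal (f x * logPlus (f x))
        + ENNReal.ofReal (f x) * ENNReal.ofReal (Real.log (1 / α))
        + ENNReal.ofReal (f x) * ENNReal.ofReal (((d : ℝ) / 2) * Real.log (2 * Real.pi * R ^ 2))
        + ENNReal.ofReal (‖x‖ ^ 2 * f x) / ENNReal.ofReal (2 * R ^ 2) := by
    intro x
    rw [← ENNReal.ofReal_mul (hf0 x), ← ENNReal.ofReal_mul (hf0 x),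
      ← ENNReal.ofReal_mul (hf0 x), ← ENNReal.ofReal_div_of_pos hRsq]
    have n1 : 0 ≤ f x * logPlus (f x) := mul_nonneg (hf0 x) (hlp _)
    have n2 : 0 ≤ f x * Real.log (1 / α) := mul_nonneg (hf0 x) hcα
    have n3 : 0 ≤ f x * (((d : ℝ) / 2) * Real.log (2 * Real.pi * R ^ 2)) :=
      mul_nonneg (hf0 x) (by positivity)
    rw [← ENNReal.ofReal_add n1 n2, ← ENNReal.ofReal_add (by linarith) n3,
      ← ENNReal.ofReal_add (by linarith)
        (div_nonneg (mul_nonneg (sq_nonneg _) (hf0 x)) hRsq.le)]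
    exact ENNReal.ofReal_le_ofReal (key x)
  -- measurability facts
  have hmf : Measurable fun x => ENNReal.ofReal (f x) := hfm.ennreal_ofReal
  have hmlp : Measurable fun x : EuclideanSpace ℝ (Fin d) =>
      ENNReal.ofReal (logPlus (f x / g x)) := by
    apply Measurable.ennreal_ofReal
    exact (Real.measurable_log.comp (hfm.div hgm)).max measurable_const
  have hmA : Measurable fun x : EuclideanSpace ℝ (Fin d) =>
      ENNReal.ofReal (f x * logPlus (f x)) := by
    apply Measurable.ennreal_ofReal
    exact hfm.mul ((Real.measurable_log.comp hfm).max measurable_const)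
  have hmN : Measurable fun x : EuclideanSpace ℝ (Fin d) =>
      ENNReal.ofReal (‖x‖ ^ 2 * f x) := by
    apply Measurable.ennreal_ofReal
    exact (measurable_norm.pow measurable_const).mul hfm
  -- rewrite the left-hand side via withDensity
  have hL : (∫⁻ x in {x : EuclideanSpace ℝ (Fin d) | R < ‖x‖},
        ENNReal.ofReal (logPlus (f x / g x)) ∂F)
      = ∫⁻ x in {x : EuclideanSpace ℝ (Fin d) | R < ‖x‖},
        ENNReal.ofReal (f x) * ENNReal.ofReal (logPlus (f x / g x)) := by
    rw [hF, restrict_withDensity hS, lintegral_withDensity_eq_lintegral_mul _ hmf hmlp]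
    rfl
  rw [hL]
  refine le_trans (lintegral_mono fun x => keyE x) ?_
  rw [lintegral_add_right _ (hmN.div_const _),
    lintegral_add_right _ (hmf.mul_const _),
    lintegral_add_right _ (hmf.mul_const _)]
  have e1 : (∫⁻ x in {x : EuclideanSpace ℝ (Fin d) | R < ‖x‖},
      ENNReal.ofReal (f x) * ENNReal.ofReal (Real.log (1 / α)))
      = ENNReal.ofReal (α * Real.log (1 / α)) := by
    rw [lintegral_mul_const _ hmf, ← hα,
      ← ENNReal.ofReal_mul hα0.le]
  have e2 : (∫⁻ x in {x : EuclideanSpace ℝ (Fin d) | R < ‖x‖},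
      ENNReal.ofReal (f x) * ENNReal.ofReal (((d : ℝ) / 2) * Real.log (2 * Real.pi * R ^ 2)))
      = ENNReal.ofReal (α * ((d : ℝ) / 2) * Real.log (2 * Real.pi * R ^ 2)) := by
    rw [lintegral_mul_const _ hmf, ← hα,
      ← ENNReal.ofReal_mul hα0.le]
    ring_nf
  have e3 : (∫⁻ x in {x : EuclideanSpace ℝ (Fin d) | R < ‖x‖},
      ENNReal.ofReal (‖x‖ ^ 2 * f x) / ENNReal.ofReal (2 * R ^ 2))
      = (∫⁻ x in {x : EuclideanSpace ℝ (Fin d) | R < ‖x‖},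
        ENNReal.ofReal (‖x‖ ^ 2 * f x)) / ENNReal.ofReal (2 * R ^ 2) := by
    simp only [div_eq_mul_inv]
    rw [lintegral_mul_const _ hmN]
  rw [e1, e2, e3]
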